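/- Let X be a Banach space, (A_m)_{m∈ℤ} a sequence of bounded linear operators on X, and f_n : X → X (n ∈ ℤ) maps satisfying ‖f_n(x) − f_n(y)‖ ≤ c‖x − y‖ for all n ∈ ℤ and x, y ∈ X, with some c > 0; set F_n = A_n + f_n. Suppose there is a bounded linear operator G on ℓ^∞(ℤ,X) such that for every y ∈ ℓ^∞(ℤ,X) the sequence x = Gy satisfies x_{n+1} − A_n x_n = y_{n+1} for all n ∈ ℤ, and suppose c‖G‖ < 1. Set K = ‖G‖/(1 − c‖G‖). Then for every ε > 0 and every sequence (y_n)_{n∈ℤ} ⊂ X with sup_{n∈ℤ} ‖y_{n+1} − F_n(y_n)‖ ≤ ε/K, there exists a sequence (x_n)_{n∈ℤ} ⊂ X with x_{n+1} = F_n(x_n) for all n ∈ ℤ and sup_{n∈ℤ} ‖x_n − y_n‖ ≤ ε. -/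

import Mathlib

open scoped ENNReal

set_option maxHeartbeats 1000000

/-- Abstract shadowing theorem: if `G` is a bounded operator on `ℓ^∞(ℤ,X)` solving the linear
difference equation `x_{n+1} - A_n x_n = y_{n+1}`, the maps `f_n` are `c`-Lipschitz and
`c‖G‖ < 1`, then with `K = ‖G‖/(1 - c‖G‖)`, every `(ε/K, ℓ^∞)`-pseudotrajectory of
`x_{n+1} = F_n(x_n)` (where `F_n = A_n + f_n`) is `ε`-shadowed by a true trajectory. -/
theorem abstract_shadowing
    {X : Type*} [NormedAddCommGroup X] [NormedSpace ℝ X] [CompleteSpace X]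
    (A : ℤ → X →L[ℝ] X) (f : ℤ → X → X) (c : ℝ) (hc : 0 < c)
    (hf : ∀ n : ℤ, ∀ x y : X, ‖f n x - f n y‖ ≤ c * ‖x - y‖)
    (G : lp (fun _ : ℤ => X) ∞ →L[ℝ] lp (fun _ : ℤ => X) ∞)
    (hG : ∀ y : lp (fun _ : ℤ => X) ∞, ∀ n : ℤ,
      (G y : ∀ _ : ℤ, X) (n + 1) - A n ((G y : ∀ _ : ℤ, X) n) = (y : ∀ _ : ℤ, X) (n + 1))
    (hcG : c * ‖G‖ < 1) (K : ℝ) (hK : K = ‖G‖ / (1 - c * ‖G‖)) :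
    ∀ ε : ℝ, 0 < ε → ∀ y : ℤ → X,
      (∀ n : ℤ, ‖y (n + 1) - (A n (y n) + f n (y n))‖ ≤ ε / K) →
      ∃ x : ℤ → X, (∀ n : ℤ, x (n + 1) = A n (x n) + f n (x n)) ∧
        ∀ n : ℤ, ‖x n - y n‖ ≤ ε := by
  intro ε hε y hy
  have h1cG : 0 < 1 - c * ‖G‖ := by linarith
  set δ : ℝ := ε / K with hδ
  have hδ0 : 0 ≤ δ := by
    apply div_nonneg hε.le
    rw [hK]
    positivity
  -- defect
  set d : ℤ → X := fun n => y (n + 1) - (A n (y n) + f n (y n)) with hd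
  have hdbd : ∀ n, ‖d n‖ ≤ δ := hy
  -- the map w : lp → (ℤ → X)
  set w : lp (fun _ : ℤ => X) ∞ → ℤ → X := fun u m =>
    f (m - 1) (y (m - 1) + (u : ∀ _ : ℤ, X) (m - 1)) - f (m - 1) (y (m - 1)) - d (m - 1)
    with hw
  have hwbd : ∀ u m, ‖w u m‖ ≤ c * ‖u‖ + δ := by
    intro u m
    have h1 : ‖f (m - 1) (y (m - 1) + (u : ∀ _ : ℤ, X) (m - 1)) - f (m - 1) (y (m - 1))‖
        ≤ c * ‖(u : ∀ _ : ℤ, X) (m - 1)‖ := by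
      simpa using hf (m - 1) (y (m - 1) + (u : ∀ _ : ℤ, X) (m - 1)) (y (m - 1))
    have h2 : ‖(u : ∀ _ : ℤ, X) (m - 1)‖ ≤ ‖u‖ :=
      lp.norm_apply_le_norm ENNReal.top_ne_zero u (m - 1)
    calc ‖w u m‖ ≤ ‖f (m - 1) (y (m - 1) + (u : ∀ _ : ℤ, X) (m - 1)) - f (m - 1) (y (m - 1))‖
          + ‖d (m - 1)‖ := norm_sub_le _ _
      _ ≤ c * ‖u‖ + δ := by
          have := hdbd (m - 1)
          nlinarith [norm_nonneg ((u : ∀ _ : ℤ, X) (m - 1))]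
  have hwmem : ∀ u, Memℓp (w u) ∞ := by
    intro u
    apply memℓp_infty
    exact ⟨c * ‖u‖ + δ, by rintro r ⟨m, rfl⟩; exact hwbd u m⟩
  set W : lp (fun _ : ℤ => X) ∞ → lp (fun _ : ℤ => X) ∞ := fun u => ⟨w u, hwmem u⟩ with hW
  have hWnorm : ∀ u, ‖W u‖ ≤ c * ‖u‖ + δ := by
    intro u
    apply lp.norm_le_of_forall_le (by positivity)
    intro m
    exact hwbd u m
  have hWlip : ∀ u v, ‖W u - W v‖ ≤ c * ‖u - v‖ := by
    intro u v
    apply lp.norm_le_of_forall_le (by positivity)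
    intro m
    have hcoe : ((W u - W v : lp (fun _ : ℤ => X) ∞) : ∀ _ : ℤ, X) m = w u m - w v m := by
      rw [lp.coeFn_sub]; rfl
    rw [hcoe]
    have : w u m - w v m =
        f (m - 1) (y (m - 1) + (u : ∀ _ : ℤ, X) (m - 1)) -
          f (m - 1) (y (m - 1) + (v : ∀ _ : ℤ, X) (m - 1)) := by
      simp only [hw]; abel
    rw [this]
    calc ‖_‖ ≤ c * ‖(y (m - 1) + (u : ∀ _ : ℤ, X) (m - 1)) -
          (y (m - 1) + (v : ∀ _ : ℤ, X) (m - 1))‖ := hf _ _ _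
      _ = c * ‖(u : ∀ _ : ℤ, X) (m - 1) - (v : ∀ _ : ℤ, X) (m - 1)‖ := by ring_nf; congr 1; abel_nf
      _ ≤ c * ‖u - v‖ := by
          have h2 : ‖(u : ∀ _ : ℤ, X) (m - 1) - (v : ∀ _ : ℤ, X) (m - 1)‖ ≤ ‖u - v‖ := by
            have := lp.norm_apply_le_norm ENNReal.top_ne_zero (u - v) (m - 1)
            rwa [lp.coeFn_sub, Pi.sub_apply] at this
          nlinarith
  -- the contraction
  set Φ : lp (fun _ : ℤ => X) ∞ → lp (fun _ : ℤ => X) ∞ := fun u => G (W u) with hΦ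
  have hΦlip : LipschitzWith ⟨c * ‖G‖, by positivity⟩ Φ := by
    apply LipschitzWith.of_dist_le_mul
    intro u v
    change dist (Φ u) (Φ v) ≤ c * ‖G‖ * dist u v
    simp only [hΦ, dist_eq_norm]
    calc ‖G (W u) - G (W v)‖ = ‖G (W u - W v)‖ := by rw [map_sub]
      _ ≤ ‖G‖ * ‖W u - W v‖ := G.le_opNorm _
      _ ≤ ‖G‖ * (c * ‖u - v‖) := by nlinarith [hWlip u v, norm_nonneg G]
      _ = c * ‖G‖ * ‖u - v‖ := by ring
  have hcontr : ContractingWith ⟨c * ‖G‖, by positivity⟩ Φ := by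
    constructor
    · exact_mod_cast hcG
    · exact hΦlip
  obtain ⟨u, hu⟩ : ∃ u, Function.IsFixedPt Φ u :=
    ⟨hcontr.fixedPoint Φ, hcontr.fixedPoint_isFixedPt⟩
  -- bound ‖u‖ ≤ ε
  have hunorm : ‖u‖ ≤ ε := by
    have h1 : ‖u‖ = ‖G (W u)‖ := by nth_rewrite 1 [← hu]; rfl
    have h2 : ‖G (W u)‖ ≤ ‖G‖ * (c * ‖u‖ + δ) := by
      calc ‖G (W u)‖ ≤ ‖G‖ * ‖W u‖ := G.le_opNorm _
        _ ≤ ‖G‖ * (c * ‖u‖ + δ) := by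
            have := hWnorm u
            nlinarith [norm_nonneg G]
    by_cases hG0 : ‖G‖ = 0
    · rw [h1]
      calc ‖G (W u)‖ ≤ ‖G‖ * ‖W u‖ := G.le_opNorm _
        _ = 0 := by rw [hG0]; ring
        _ ≤ ε := hε.le
    · have hGpos : 0 < ‖G‖ := lt_of_le_of_ne (norm_nonneg G) (Ne.symm hG0)
      have hKpos : 0 < K := by rw [hK]; positivity
      have hδK : δ * K = ε := by
        rw [hδ]; field_simp
      have hKval : K * (1 - c * ‖G‖) = ‖G‖ := by
        rw [hK]; field_simp; exact div_self (ne_of_gt (by linarith [mul_comm c ‖G‖]))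
      -- ‖u‖ ≤ ‖G‖(c‖u‖+δ) ⇒ (1-c‖G‖)‖u‖ ≤ ‖G‖δ = K(1-c‖G‖)δ ⇒ ‖u‖ ≤ Kδ = ε
      have h3 := h2
      rw [← h1] at h3
      nlinarith [h3, hKval, hδK, norm_nonneg u]
  -- the shadowing trajectory
  refine ⟨fun n => y n + (u : ∀ _ : ℤ, X) n, ?_, ?_⟩
  · intro n
    have hfix : ∀ m : ℤ, (u : ∀ _ : ℤ, X) m = ((G (W u) : lp (fun _ : ℤ => X) ∞) : ∀ _ : ℤ, X) m := by
      intro m; rw [show G (W u) = u from hu]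
    have hrec := hG (W u) n
    rw [← hfix (n + 1), ← hfix n] at hrec
    have hWval : ((W u : lp (fun _ : ℤ => X) ∞) : ∀ _ : ℤ, X) (n + 1) = w u (n + 1) := rfl
    rw [hWval] at hrec
    have hwval : w u (n + 1) = f n (y n + (u : ∀ _ : ℤ, X) n) - f n (y n) - d n := by
      simp only [hw, add_sub_cancel_right]
    rw [hwval, hd] at hrec
    have := hrec
    -- u(n+1) - A n (u n) = f n (y n + u n) - f n (y n) - (y(n+1) - (A n (y n) + f n (y n)))
    have hA : A n (y n + (u : ∀ _ : ℤ, X) n) = A n (y n) + A n ((u : ∀ _ : ℤ, X) n) :=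
      map_add _ _ _
    rw [hA]
    have : y (n + 1) + (u : ∀ _ : ℤ, X) (n + 1)
        = y (n + 1) + (A n ((u : ∀ _ : ℤ, X) n) + (f n (y n + (u : ∀ _ : ℤ, X) n) - f n (y n)
          - (y (n + 1) - (A n (y n) + f n (y n))))) := by
      rw [← hrec]; abel
    show y (n + 1) + (u : ∀ _ : ℤ, X) (n + 1)
      = A n (y n) + A n ((u : ∀ _ : ℤ, X) n) + f n (y n + (u : ∀ _ : ℤ, X) n)
    rw [this]; abel
  · intro n
    have h2 : ‖(u : ∀ _ : ℤ, X) n‖ ≤ ‖u‖ := lp.norm_apply_le_norm ENNReal.top_ne_zero u n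
    calc ‖y n + (u : ∀ _ : ℤ, X) n - y n‖ = ‖(u : ∀ _ : ℤ, X) n‖ := by congr 1; abel
      _ ≤ ε := h2.trans hunorm
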